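/- Let F be a nonempty subset of ℝ², let u be a unit vector in ℝ², and suppose that the difference set F − F = { x − y : x, y ∈ F } is disjoint from some double wedge around u. Then the restriction of the orthogonal projection T_u to F is a quasi-isometric embedding of F into ℝ. -/

import Mathlib

open Filter Metric Set
set_option maxHeartbeats 800000

/-- `f` is a `(lam, δ)`-quasi-isometry from `X` to `Y`. -/
def IsQuasiIsometryOn {α β : Type*} [PseudoMetricSpace α] [PseudoMetricSpace β]
    (f : α → β) (X : Set α) (Y : Set β) (lam δ : ℝ) : Prop :=
  (∀ x ∈ X, f x ∈ Y) ∧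
  (∀ x ∈ X, ∀ x' ∈ X,
    lam⁻¹ * dist x x' - δ ≤ dist (f x) (f x') ∧ dist (f x) (f x') ≤ lam * dist x x' + δ) ∧
  (∀ y ∈ Y, ∃ x ∈ X, dist (f x) y < δ)

/-- `Tu u : ℝ² → ℝ` is the orthogonal projection parallel to `u`, i.e. the orthogonal projection
(with the orthogonal complement of `u` identified isometrically with `ℝ`) whose fibers are the
lines parallel to `u`: `Tu u x = Tu u y ↔ x - y = t • u` for some `t : ℝ` (when `‖u‖ = 1`). -/
def Tu (u x : EuclideanSpace ℝ (Fin 2)) : ℝ :=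
  x 0 * u 1 - x 1 * u 0

/-- The double wedge `C^u_{s,ε} = { t • v : |t| > s, ‖v‖ = 1, ‖v - u‖ < ε }` around `u`. -/
def doubleWedge (u : EuclideanSpace ℝ (Fin 2)) (s ε : ℝ) : Set (EuclideanSpace ℝ (Fin 2)) :=
  {w | ∃ (t : ℝ) (v : EuclideanSpace ℝ (Fin 2)), s < |t| ∧ ‖v‖ = 1 ∧ ‖v - u‖ < ε ∧ w = t • v}

lemma norm_sq_eq2 (w : EuclideanSpace ℝ (Fin 2)) : ‖w‖^2 = w 0 ^ 2 + w 1 ^ 2 := by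
  rw [EuclideanSpace.norm_eq, Real.sq_sqrt (by positivity)]
  simp [Fin.sum_univ_two, Real.norm_eq_abs, sq_abs]

-- main estimate
lemma key_est (F : Set (EuclideanSpace ℝ (Fin 2)))
    (u : EuclideanSpace ℝ (Fin 2)) (hu : ‖u‖ = 1) (s ε : ℝ) (hs : 0 < s) (hε : 0 < ε)
    (hdisj : Disjoint {w | ∃ x ∈ F, ∃ y ∈ F, w = x - y} (doubleWedge u s ε))
    (x : EuclideanSpace ℝ (Fin 2)) (hx : x ∈ F) (x' : EuclideanSpace ℝ (Fin 2)) (hx' : x' ∈ F)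
    (hn : s < ‖x - x'‖) :
    Real.sqrt (min ε 1 ^ 2 * (1 - min ε 1 ^ 2 / 4)) * ‖x - x'‖ ≤ |Tu u (x - x')| := by
  set ε' := min ε 1 with hε'def
  have hε'0 : 0 < ε' := lt_min hε one_pos
  have hε'1 : ε' ≤ 1 := min_le_right _ _
  have hε'ε : ε' ≤ ε := min_le_left _ _
  set w := x - x' with hw
  set n := ‖w‖ with hndef
  have hn0 : 0 < n := lt_trans hs hn
  set v : EuclideanSpace ℝ (Fin 2) := n⁻¹ • w with hv
  have hvnorm : ‖v‖ = 1 := by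
    rw [hv, norm_smul, norm_inv, Real.norm_eq_abs, abs_of_pos hn0]
    field_simp
    exact hndef.symm
  have hwmem : w ∈ {w | ∃ x ∈ F, ∃ y ∈ F, w = x - y} := ⟨x, hx, x', hx', rfl⟩
  have hwv : w = n • v := by rw [hv, smul_smul, mul_inv_cancel₀ (ne_of_gt hn0), one_smul]
  have h1 : ε ≤ ‖v - u‖ := by
    by_contra h
    push_neg at h
    exact Set.disjoint_left.mp hdisj hwmem
      ⟨n, v, by rwa [abs_of_pos hn0], hvnorm, h, hwv⟩
  have h2 : ε ≤ ‖-v - u‖ := by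
    by_contra h
    push_neg at h
    refine Set.disjoint_left.mp hdisj hwmem
      ⟨-n, -v, by rwa [abs_neg, abs_of_pos hn0], by rwa [norm_neg], h, ?_⟩
    rw [smul_neg, neg_smul, neg_neg, hwv]
  -- coordinates
  have hvi : ∀ i, v i = n⁻¹ * w i := fun i => rfl
  have hvn : v 0 ^ 2 + v 1 ^ 2 = 1 := by rw [← norm_sq_eq2, hvnorm]; norm_num
  have hun : u 0 ^ 2 + u 1 ^ 2 = 1 := by rw [← norm_sq_eq2, hu]; norm_num
  have hsq1 : ε' ^ 2 ≤ (v 0 - u 0) ^ 2 + (v 1 - u 1) ^ 2 := by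
    have : ε' ≤ ‖v - u‖ := le_trans hε'ε h1
    have h := sq_le_sq' (by nlinarith [norm_nonneg (v - u)]) this
    rw [norm_sq_eq2 (v - u)] at h
    simpa using h
  have hsq2 : ε' ^ 2 ≤ (-v 0 - u 0) ^ 2 + (-v 1 - u 1) ^ 2 := by
    have : ε' ≤ ‖-v - u‖ := le_trans hε'ε h2
    have h := sq_le_sq' (by nlinarith [norm_nonneg (-v - u)]) this
    rw [norm_sq_eq2 (-v - u)] at h
    simpa using h
  -- inner product bounds
  have hB1 : v 0 * u 0 + v 1 * u 1 ≤ 1 - ε' ^ 2 / 2 := by nlinarith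
  have hB2 : -(v 0 * u 0 + v 1 * u 1) ≤ 1 - ε' ^ 2 / 2 := by nlinarith
  have hwi : ∀ i, w i = n * v i := by
    intro i; rw [hvi i]; field_simp
  have hwn : w 0 ^ 2 + w 1 ^ 2 = n ^ 2 := by rw [hndef, norm_sq_eq2]
  have hA : (Tu u w) ^ 2 + (w 0 * u 0 + w 1 * u 1) ^ 2 = n ^ 2 := by
    have : (Tu u w) ^ 2 + (w 0 * u 0 + w 1 * u 1) ^ 2
        = (w 0 ^ 2 + w 1 ^ 2) * (u 0 ^ 2 + u 1 ^ 2) := by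
      simp only [Tu]; ring
    rw [this, hun, hwn, mul_one]
  have hBw : (w 0 * u 0 + w 1 * u 1) ^ 2 ≤ (1 - ε' ^ 2 / 2) ^ 2 * n ^ 2 := by
    have h3 : w 0 * u 0 + w 1 * u 1 = n * (v 0 * u 0 + v 1 * u 1) := by
      rw [hwi 0, hwi 1]; ring
    rw [h3]
    have hsq : (v 0 * u 0 + v 1 * u 1) ^ 2 ≤ (1 - ε' ^ 2 / 2) ^ 2 :=
      sq_le_sq' (by linarith) hB1
    calc (n * (v 0 * u 0 + v 1 * u 1)) ^ 2 = n ^ 2 * (v 0 * u 0 + v 1 * u 1) ^ 2 := by ring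
      _ ≤ n ^ 2 * (1 - ε' ^ 2 / 2) ^ 2 := mul_le_mul_of_nonneg_left hsq (sq_nonneg n)
      _ = (1 - ε' ^ 2 / 2) ^ 2 * n ^ 2 := by ring
  have hAsq : ε' ^ 2 * (1 - ε' ^ 2 / 4) * n ^ 2 ≤ (Tu u w) ^ 2 := by nlinarith
  calc Real.sqrt (ε' ^ 2 * (1 - ε' ^ 2 / 4)) * n
      = Real.sqrt (ε' ^ 2 * (1 - ε' ^ 2 / 4) * n ^ 2) := by
        rw [Real.sqrt_mul (by nlinarith) (n^2), Real.sqrt_sq hn0.le]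
    _ ≤ Real.sqrt ((Tu u w) ^ 2) := Real.sqrt_le_sqrt hAsq
    _ = |Tu u w| := Real.sqrt_sq_eq_abs _

theorem stmt9 (F : Set (EuclideanSpace ℝ (Fin 2))) (hF : F.Nonempty)
    (u : EuclideanSpace ℝ (Fin 2)) (hu : ‖u‖ = 1) (s ε : ℝ) (hs : 0 < s) (hε : 0 < ε)
    (hdisj : Disjoint {w | ∃ x ∈ F, ∃ y ∈ F, w = x - y} (doubleWedge u s ε)) :
    ∃ lam δ : ℝ, 0 < lam ∧ 0 < δ ∧ IsQuasiIsometryOn (Tu u) F (Tu u '' F) lam δ := by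
  have hε'0 : 0 < min ε 1 := lt_min hε one_pos
  have hε'1 : min ε 1 ≤ 1 := min_le_right _ _
  have hk0 : 0 < min ε 1 ^ 2 * (1 - min ε 1 ^ 2 / 4) := by
    have h2 : min ε 1 ^ 2 ≤ 1 := by nlinarith
    nlinarith [mul_pos hε'0 hε'0]
  have hsk : 0 < Real.sqrt (min ε 1 ^ 2 * (1 - min ε 1 ^ 2 / 4)) := Real.sqrt_pos.2 hk0
  refine ⟨max 1 (Real.sqrt (min ε 1 ^ 2 * (1 - min ε 1 ^ 2 / 4)))⁻¹, s + 1, ?_, by linarith,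
    ?_, ?_, ?_⟩
  · exact lt_of_lt_of_le one_pos (le_max_left _ _)
  · exact fun x hx => mem_image_of_mem _ hx
  · intro x hx x' hx'
    have hlam1 : (1:ℝ) ≤ max 1 (Real.sqrt (min ε 1 ^ 2 * (1 - min ε 1 ^ 2 / 4)))⁻¹ :=
      le_max_left _ _
    have hlaminv : (max 1 (Real.sqrt (min ε 1 ^ 2 * (1 - min ε 1 ^ 2 / 4)))⁻¹)⁻¹ ≤
        Real.sqrt (min ε 1 ^ 2 * (1 - min ε 1 ^ 2 / 4)) := by
      have h := inv_anti₀ (inv_pos.2 hsk)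
        (le_max_right 1 (Real.sqrt (min ε 1 ^ 2 * (1 - min ε 1 ^ 2 / 4)))⁻¹)
      rwa [inv_inv] at h
    have hlaminv1 : (max 1 (Real.sqrt (min ε 1 ^ 2 * (1 - min ε 1 ^ 2 / 4)))⁻¹)⁻¹ ≤ 1 := by
      have h := inv_anti₀ one_pos hlam1
      rwa [inv_one] at h
    have hTu : dist (Tu u x) (Tu u x') = |Tu u (x - x')| := by
      rw [Real.dist_eq]
      congr 1
      simp only [Tu]
      have h0 : (x - x') 0 = x 0 - x' 0 := by simp
      have h1 : (x - x') 1 = x 1 - x' 1 := by simp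
      rw [h0, h1]; ring
    have hd : dist x x' = ‖x - x'‖ := dist_eq_norm x x'
    have hun : u 0 ^ 2 + u 1 ^ 2 = 1 := by rw [← norm_sq_eq2, hu]; norm_num
    constructor
    · rcases le_or_gt ‖x - x'‖ s with h | h
      · have h1 : (max 1 (Real.sqrt (min ε 1 ^ 2 * (1 - min ε 1 ^ 2 / 4)))⁻¹)⁻¹ * dist x x'
            ≤ s := by
          rw [hd]
          calc _ ≤ 1 * ‖x - x'‖ := mul_le_mul_of_nonneg_right hlaminv1 (norm_nonneg _)
            _ ≤ s := by rwa [one_mul]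
        have h2 := abs_nonneg (Tu u (x - x'))
        rw [hTu]; linarith
      · have hk2 := key_est F u hu s ε hs hε hdisj x hx x' hx' h
        rw [hTu, hd]
        have h3 : (max 1 (Real.sqrt (min ε 1 ^ 2 * (1 - min ε 1 ^ 2 / 4)))⁻¹)⁻¹ * ‖x - x'‖
            ≤ Real.sqrt (min ε 1 ^ 2 * (1 - min ε 1 ^ 2 / 4)) * ‖x - x'‖ :=
          mul_le_mul_of_nonneg_right hlaminv (norm_nonneg _)
        linarith
    · have hwn := norm_sq_eq2 (x - x')
      have hA2 : (Tu u (x - x')) ^ 2 ≤ ‖x - x'‖ ^ 2 := by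
        simp only [Tu]
        nlinarith [sq_nonneg ((x - x') 0 * u 0 + (x - x') 1 * u 1)]
      have hup : |Tu u (x - x')| ≤ ‖x - x'‖ := by
        calc |Tu u (x - x')| = Real.sqrt ((Tu u (x - x')) ^ 2) := (Real.sqrt_sq_eq_abs _).symm
          _ ≤ Real.sqrt (‖x - x'‖ ^ 2) := Real.sqrt_le_sqrt hA2
          _ = ‖x - x'‖ := Real.sqrt_sq (norm_nonneg _)
      rw [hTu, hd]
      nlinarith [norm_nonneg (x - x')]
  · rintro y ⟨x, hx, rfl⟩
    exact ⟨x, hx, by simp; linarith⟩
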